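/- Suppose (h_i)_{i∈ℕ} is a sequence of homeomorphisms of ℝⁿ such that Σ_i dist_{C⁰}(id, h_i) < ∞, all h_i are supported in a common compact set K, and for every x ∈ ℝⁿ there exists N(x) such that h_n(h_{N(x)} ∘ ⋯ ∘ h_1(x)) = h_{N(x)} ∘ ⋯ ∘ h_1(x) for all n ≥ N(x). Then the compositions H_n = h_n ∘ ⋯ ∘ h_1 converge uniformly to a continuous injective map H : ℝⁿ → ℝⁿ which equals the identity outside K; consequently H is a homeomorphism of ℝⁿ. -/

import Mathlib

/-- The partial composition `h_{n-1} ∘ ⋯ ∘ h_0` of a sequence of homeomorphisms. -/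
def iterComp {E : Type*} [TopologicalSpace E] (h : ℕ → (E ≃ₜ E)) : ℕ → E → E
  | 0 => id
  | n + 1 => ⇑(h n) ∘ iterComp h n

/-- If homeomorphisms `h_i` of `ℝᵈ` are supported in a common compact set `K`, satisfy
`Σ_i dist_{C⁰}(id, h_i) < ∞`, and every point is eventually stabilized by the partial
compositions, then the compositions converge uniformly to a homeomorphism `H` of `ℝᵈ`
which is the identity outside `K`. -/
theorem stmt17 {d : ℕ} (h : ℕ → (EuclideanSpace ℝ (Fin d) ≃ₜ EuclideanSpace ℝ (Fin d)))
    (K : Set (EuclideanSpace ℝ (Fin d))) (hK : IsCompact K)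
    (hsupp : ∀ i, ∀ x ∉ K, h i x = x)
    (hsum : Summable fun i => ⨆ x, dist (h i x) x)
    (hstab : ∀ x, ∃ N, ∀ n ≥ N, iterComp h n x = iterComp h N x) :
    ∃ H : EuclideanSpace ℝ (Fin d) ≃ₜ EuclideanSpace ℝ (Fin d),
      TendstoUniformly (fun n => iterComp h n) (⇑H) Filter.atTop ∧
      ∀ x ∉ K, H x = x := by
  classical
  set a : ℕ → ℝ := fun i => ⨆ x, dist (h i x) x with ha
  -- boundedness of the sup
  have hbdd : ∀ i, BddAbove (Set.range fun x : EuclideanSpace ℝ (Fin d) => dist (h i x) x) := by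
    intro i
    have hsub : (Set.range fun x : EuclideanSpace ℝ (Fin d) => dist (h i x) x) ⊆
        insert 0 ((fun x : EuclideanSpace ℝ (Fin d) => dist (h i x) x) '' K) := by
      rintro r ⟨x, rfl⟩
      by_cases hx : x ∈ K
      · exact Set.mem_insert_of_mem _ ⟨x, hx, rfl⟩
      · simp [hsupp i x hx]
    have hcomp : IsCompact ((fun x : EuclideanSpace ℝ (Fin d) => dist (h i x) x) '' K) :=
      hK.image ((h i).continuous.dist continuous_id)
    exact (hcomp.insert 0).isBounded.bddAbove.mono hsub
  have hle : ∀ i (x : EuclideanSpace ℝ (Fin d)), dist (h i x) x ≤ a i := fun i x => le_ciSup (hbdd i) x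
  -- continuity of the partial compositions
  have itcont : ∀ n, Continuous (iterComp h n) := by
    intro n
    induction n with
    | zero => exact continuous_id
    | succ n ih => exact (h n).continuous.comp ih
  -- partial compositions are bijective
  have itbij : ∀ n, Function.Bijective (iterComp h n) := by
    intro n
    induction n with
    | zero => exact Function.bijective_id
    | succ n ih => exact (h n).bijective.comp ih
  -- partial compositions fix points outside K
  have itfix : ∀ n, ∀ x ∉ K, iterComp h n x = x := by
    intro n x hx
    induction n with
    | zero => rfl
    | succ n ih => show h n (iterComp h n x) = x; rw [ih, hsupp n x hx]
  -- distance estimate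
  have hdist : ∀ n m, n ≤ m → ∀ x : EuclideanSpace ℝ (Fin d),
      dist (iterComp h m x) (iterComp h n x) ≤ ∑ i ∈ Finset.Ico n m, a i := by
    intro n m hnm x
    induction m, hnm using Nat.le_induction with
    | base => simp
    | succ m hnm ih =>
      calc dist (iterComp h (m + 1) x) (iterComp h n x)
          ≤ dist (iterComp h (m + 1) x) (iterComp h m x)
            + dist (iterComp h m x) (iterComp h n x) := dist_triangle _ _ _
        _ ≤ a m + ∑ i ∈ Finset.Ico n m, a i := by
            refine add_le_add ?_ ih
            exact hle m (iterComp h m x)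
        _ = ∑ i ∈ Finset.Ico n (m + 1), a i := by
            rw [Finset.sum_Ico_succ_top hnm]; ring
  -- uniform Cauchy
  have hcauchy : UniformCauchySeqOn (fun n => iterComp h n) Filter.atTop
      (Set.univ : Set (EuclideanSpace ℝ (Fin d))) := by
    rw [Metric.uniformCauchySeqOn_iff]
    intro ε hε
    have hS : CauchySeq fun n => ∑ i ∈ Finset.range n, a i :=
      hsum.hasSum.tendsto_sum_nat.cauchySeq
    rw [Metric.cauchySeq_iff] at hS
    obtain ⟨N, hN⟩ := hS ε hε
    refine ⟨N, fun m hm n hn x _ => ?_⟩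
    have key : ∀ p q, N ≤ p → N ≤ q → p ≤ q →
        dist (iterComp h q x) (iterComp h p x) < ε := by
      intro p q hp hq hpq
      calc dist (iterComp h q x) (iterComp h p x)
          ≤ ∑ i ∈ Finset.Ico p q, a i := hdist p q hpq x
        _ = ∑ i ∈ Finset.range q, a i - ∑ i ∈ Finset.range p, a i :=
            Finset.sum_Ico_eq_sub _ hpq
        _ ≤ |∑ i ∈ Finset.range q, a i - ∑ i ∈ Finset.range p, a i| := le_abs_self _
        _ = dist (∑ i ∈ Finset.range q, a i) (∑ i ∈ Finset.range p, a i) :=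
            (Real.dist_eq _ _).symm
        _ < ε := hN q hq p hp
    rcases le_total m n with hmn | hnm
    · rw [dist_comm]; exact key m n hm hn hmn
    · exact key n m hn hm hnm
  -- the pointwise limit
  set Hf : EuclideanSpace ℝ (Fin d) → EuclideanSpace ℝ (Fin d) := fun x => iterComp h (hstab x).choose x with hHf
  have hpt : ∀ x : EuclideanSpace ℝ (Fin d), Filter.Tendsto (fun n => iterComp h n x) Filter.atTop (nhds (Hf x)) := by
    intro x
    refine tendsto_const_nhds.congr' ?_
    filter_upwards [Filter.eventually_ge_atTop (hstab x).choose] with n hn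
    exact ((hstab x).choose_spec n hn).symm
  -- uniform convergence
  have Htu : TendstoUniformly (fun n => iterComp h n) Hf Filter.atTop := by
    rw [← tendstoUniformlyOn_univ]
    exact hcauchy.tendstoUniformlyOn_of_tendsto fun x _ => hpt x
  have Hcont : Continuous Hf :=
    Htu.continuous (Filter.Frequently.of_forall fun n => itcont n)
  -- Hf agrees with a deep enough partial composition
  have hagree : ∀ x : EuclideanSpace ℝ (Fin d), ∀ n, (hstab x).choose ≤ n → iterComp h n x = Hf x :=
    fun x n hn => (hstab x).choose_spec n hn
  -- Hf fixes points outside K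
  have Hfix : ∀ x ∉ K, Hf x = x := fun x hx => itfix _ x hx
  -- injectivity
  have hinj : Function.Injective Hf := by
    intro x y hxy
    set M := max (hstab x).choose (hstab y).choose
    have hx' : iterComp h M x = Hf x := hagree x M (le_max_left _ _)
    have hy' : iterComp h M y = Hf y := hagree y M (le_max_right _ _)
    exact (itbij M).1 (by rw [hx', hy', hxy])
  -- surjectivity
  have hsurj : Function.Surjective Hf := by
    intro y
    set xs : ℕ → EuclideanSpace ℝ (Fin d) := fun n => ((itbij n).2 y).choose with hxsdef
    have hxs : ∀ n, iterComp h n (xs n) = y := fun n => ((itbij n).2 y).choose_spec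
    have hmem : ∀ n, xs n ∈ insert y K := by
      intro n
      by_cases hxk : xs n ∈ K
      · exact Set.mem_insert_of_mem _ hxk
      · have h2 := hxs n
        rw [itfix n (xs n) hxk] at h2
        rw [h2]
        exact Set.mem_insert y K
    obtain ⟨x, -, φ, hφ, hconv⟩ := (hK.insert y).tendsto_subseq hmem
    refine ⟨x, ?_⟩
    have h1 : Filter.Tendsto (fun k => Hf (xs (φ k))) Filter.atTop (nhds (Hf x)) :=
      (Hcont.tendsto x).comp hconv
    have h2 : Filter.Tendsto (fun k => Hf (xs (φ k))) Filter.atTop (nhds y) := by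
      rw [Metric.tendsto_atTop]
      intro ε hε
      have := Metric.tendstoUniformly_iff.mp Htu ε hε
      obtain ⟨N, hN⟩ := Filter.eventually_atTop.mp (hφ.tendsto_atTop.eventually this)
      refine ⟨N, fun k hk => ?_⟩
      have := hN k hk (xs (φ k))
      rwa [hxs (φ k)] at this
    exact tendsto_nhds_unique h1 h2
  -- proper, hence closed
  have hclosed : IsClosedMap Hf := by
    refine IsProperMap.isClosedMap (isProperMap_iff_isCompact_preimage.mpr ⟨Hcont, ?_⟩)
    intro C hC
    refine (hK.union hC).of_isClosed_subset (hC.isClosed.preimage Hcont) ?_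
    intro x hx
    by_cases hxk : x ∈ K
    · exact Or.inl hxk
    · exact Or.inr (by rwa [← Hfix x hxk])
  refine ⟨Equiv.toHomeomorphOfContinuousClosed
    (Equiv.ofBijective Hf ⟨hinj, hsurj⟩) Hcont hclosed, ?_, ?_⟩
  · exact Htu
  · exact Hfix
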